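/- arXiv:1002.4662 — 9 statements merged into one kernel-verified Lean document; each statement's English description precedes it below -/
import Mathlib

section
/- Let p be a prime and let Z/p act on the polynomial ring F_p[x_1,...,x_m, y_1,...,y_m] by σ(y_i) = y_i + x_i and σ(x_i) = x_i. Then the image of the invariant ring F_p[x_1,...,x_m,y_1,...,y_m]^{Z/p} under the quotient map sending each x_i to 0 is exactly F_p[y_1^p, ..., y_m^p]. -/
open MvPolynomial

variable {p m : ℕ}

/-- expand of a monomial. -/
lemma my_expand_monomial (p : ℕ) (hp : p ≠ 0) (d : Fin m →₀ ℕ) (r : ZMod p) :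
    expand p (monomial d r : MvPolynomial (Fin m) (ZMod p)) = monomial (p • d) r := by
  rw [MvPolynomial.expand_monomial, monomial_eq]

lemma mem_range_expand (hp : p.Prime) (g : MvPolynomial (Fin m) (ZMod p))
    (hd : ∀ i, pderiv i g = 0) :
    ∃ h : MvPolynomial (Fin m) (ZMod p), expand p h = g := by
  haveI := Fact.mk hp
  have key : ∀ d ∈ g.support, ∀ i, p ∣ d i := by
    intro d hdsupp i
    rcases Nat.eq_zero_or_pos (d i) with h0 | hpos
    · simp [h0]
    -- coefficient of pderiv
    have hco : coeff (d - Finsupp.single i 1) (pderiv i g) = (d i : ZMod p) * coeff d g := by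
      classical
      conv_lhs => rw [g.as_sum]
      rw [map_sum, coeff_sum]
      rw [Finset.sum_eq_single d]
      · rw [pderiv_monomial, coeff_monomial, if_pos rfl, mul_comm]
      · intro d' hd' hne
        rw [pderiv_monomial, coeff_monomial]
        split_ifs with he
        · rcases Nat.eq_zero_or_pos (d' i) with h0' | hpos'
          · simp [h0']
          · exfalso; apply hne
            ext j
            have := DFunLike.congr_fun he j
            simp only [Finsupp.tsub_apply, Finsupp.single_apply] at this
            by_cases hj : i = j
            · subst hj; simp at this; omega
            · simpa [hj] using this
        · simp
      · intro h; exact absurd hdsupp h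
    rw [hd i] at hco
    have : (d i : ZMod p) = 0 := by
      have := hco.symm
      rcases mul_eq_zero.mp this with h | h
      · exact h
      · exact absurd h (by simpa [mem_support_iff] using hdsupp)
    exact (ZMod.natCast_eq_zero_iff _ _).mp this
  refine ⟨g.support.sum fun d => monomial (d.mapRange (· / p) (Nat.zero_div _)) (coeff d g), ?_⟩
  rw [map_sum]
  conv_rhs => rw [g.as_sum]
  refine Finset.sum_congr rfl fun d hdsupp => ?_
  have hsm : p • d.mapRange (· / p) (Nat.zero_div _) = d := by
    ext j
    rw [Finsupp.smul_apply, Finsupp.mapRange_apply, smul_eq_mul]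
    exact Nat.mul_div_cancel' (key d hdsupp j)
  rw [my_expand_monomial p hp.ne_zero, hsm]

lemma qA_pderiv (f : MvPolynomial (Fin m ⊕ Fin m) (ZMod p)) (i : Fin m) :
    pderiv i (aeval (Sum.elim (fun _ => (0 : MvPolynomial (Fin m) (ZMod p))) X) f)
      = aeval (Sum.elim (fun _ => (0 : MvPolynomial (Fin m) (ZMod p))) X)
          (pderiv (Sum.inr i) f) := by
  classical
  simp only [aeval_eq_bind₁]
  induction f using MvPolynomial.induction_on with
  | C a => simp
  | add f g hf hg => simp [hf, hg]
  | mul_X f j hf =>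
    cases j with
    | inl a => simp [pderiv_mul, hf]
    | inr a =>
      by_cases hia : i = a
      · subst hia; simp [pderiv_mul, hf]
      · simp [pderiv_mul, hf, pderiv_X, Pi.single_apply, hia]

lemma sig_pderiv (f : MvPolynomial (Fin m ⊕ Fin m) (ZMod p)) (i : Fin m) :
    pderiv (Sum.inl i)
        (aeval (Sum.elim (fun i => (X (Sum.inl i) : MvPolynomial (Fin m ⊕ Fin m) (ZMod p)))
          (fun i => X (Sum.inr i) + X (Sum.inl i))) f)
      = aeval (Sum.elim (fun i => (X (Sum.inl i) : MvPolynomial (Fin m ⊕ Fin m) (ZMod p)))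
          (fun i => X (Sum.inr i) + X (Sum.inl i)))
          (pderiv (Sum.inl i) f + pderiv (Sum.inr i) f) := by
  classical
  simp only [aeval_eq_bind₁]
  induction f using MvPolynomial.induction_on with
  | C a => simp
  | add f g hf hg =>
    simp only [map_add] at *
    rw [hf, hg]; ring
  | mul_X f j hf =>
    cases j with
    | inl a =>
      by_cases hia : i = a
      · subst hia
        simp only [map_mul, aeval_X, Sum.elim_inl, pderiv_mul, pderiv_X_self, mul_one,
          pderiv_X, Pi.single_apply, map_add, hf]
        simp [Pi.single_apply]
        ring
      · simp only [map_mul, aeval_X, Sum.elim_inl, pderiv_mul, map_add, hf,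
          pderiv_X, Pi.single_apply, Sum.inl.injEq, hia, if_neg, if_false]
        simp [Pi.single_apply, hia, Ne.symm hia]
        ring
    | inr a =>
      by_cases hia : i = a
      · subst hia
        simp only [map_mul, aeval_X, Sum.elim_inr, pderiv_mul, map_add, hf,
          pderiv_X, Pi.single_apply]
        simp [Pi.single_apply]
        ring
      · simp only [map_mul, aeval_X, Sum.elim_inr, pderiv_mul, map_add, hf,
          pderiv_X, Pi.single_apply]
        simp [Pi.single_apply, hia, Ne.symm hia]
        ring

/-- Let `Z/p` act on `F_p[x_1,…,x_m,y_1,…,y_m]` by `σ(x_i) = x_i`, `σ(y_i) = y_i + x_i`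
(the `x`'s are the `Sum.inl` variables, the `y`'s the `Sum.inr` variables).  The image of
the ring of invariants under the quotient map setting each `x_i = 0` (identified with the
surjection onto `F_p[y_1,…,y_m]`) is exactly `F_p[y_1^p,…,y_m^p]`. -/
theorem stmt2 (p m : ℕ) (hp : p.Prime) :
    {g : MvPolynomial (Fin m) (ZMod p) |
        ∃ f : MvPolynomial (Fin m ⊕ Fin m) (ZMod p),
          aeval (Sum.elim (fun i => (X (Sum.inl i) : MvPolynomial (Fin m ⊕ Fin m) (ZMod p)))
              (fun i => X (Sum.inr i) + X (Sum.inl i))) f = f ∧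
          aeval (Sum.elim (fun _ => (0 : MvPolynomial (Fin m) (ZMod p)))
              (fun i => X i)) f = g} =
      ↑(Algebra.adjoin (ZMod p)
          (Set.range fun i : Fin m => (X i : MvPolynomial (Fin m) (ZMod p)) ^ p)) := by
  classical
  haveI := Fact.mk hp
  set s : Fin m ⊕ Fin m → MvPolynomial (Fin m ⊕ Fin m) (ZMod p) :=
    Sum.elim (fun i => X (Sum.inl i)) (fun i => X (Sum.inr i) + X (Sum.inl i)) with hs
  set q : Fin m ⊕ Fin m → MvPolynomial (Fin m) (ZMod p) :=
    Sum.elim (fun _ => 0) X with hq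
  have hqs : ∀ x : MvPolynomial (Fin m ⊕ Fin m) (ZMod p), aeval q (aeval s x) = aeval q x := by
    intro x
    rw [← AlgHom.comp_apply]
    refine DFunLike.congr_fun (MvPolynomial.algHom_ext fun j => ?_) x
    cases j <;> simp [hs, hq]
  have hexp : ∀ f : MvPolynomial (Fin m) (ZMod p),
      expand p f = aeval (fun i => X i ^ p) f := fun _ => rfl
  ext g
  simp only [Set.mem_setOf_eq, SetLike.mem_coe, Algebra.adjoin_range_eq_range_aeval,
    AlgHom.mem_range]
  constructor
  · rintro ⟨f, hinv, rfl⟩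
    have hz : ∀ i, pderiv i (aeval q f) = 0 := by
      intro i
      rw [hq, qA_pderiv]
      have h1 := sig_pderiv f i
      rw [hinv] at h1
      have h2 := congrArg (aeval q) h1
      rw [hqs, map_add] at h2
      exact left_eq_add.mp h2
    obtain ⟨h, hh⟩ := mem_range_expand hp _ hz
    exact ⟨h, by rw [← hexp, hh]⟩
  · rintro ⟨h, rfl⟩
    set w : Fin m → MvPolynomial (Fin m ⊕ Fin m) (ZMod p) :=
      fun i => X (Sum.inr i) ^ p - X (Sum.inl i) ^ (p - 1) * X (Sum.inr i) with hw
    refine ⟨aeval w h, ?_, ?_⟩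
    · rw [← AlgHom.comp_apply, comp_aeval]
      have hwfix : (fun i => aeval s (w i)) = w := by
        funext i
        simp only [hw, map_sub, map_mul, map_pow, aeval_X, hs, Sum.elim_inl, Sum.elim_inr]
        rw [add_pow_char, mul_add, pow_sub_one_mul hp.ne_zero]
        ring
      rw [hwfix]
    · rw [← AlgHom.comp_apply, comp_aeval]
      have hwq : (fun i => aeval q (w i)) =
          fun i => (X i : MvPolynomial (Fin m) (ZMod p)) ^ p := by
        funext i
        simp only [hw, map_sub, map_mul, map_pow, aeval_X, hq, Sum.elim_inl, Sum.elim_inr]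
        rw [zero_pow (Nat.sub_ne_zero_of_lt hp.one_lt)]
        ring
      rw [hwq]
end

section
/- Let p be a prime and V a finite-dimensional F_p[Z/p]-module which is a direct sum V = W ⊕ U with W a trivial module and U reduced. Then the image of the invariant ring S(V)^{Z/p} under the natural surjection S(V) → S(V_{Z/p}) equals the subalgebra S(W ⊕ Φ(U_{Z/p})), where Φ denotes the span of p-th powers. -/
open MvPolynomial

namespace Stmt4Aux

variable {p : ℕ} [Fact p.Prime] {a b c : ℕ}
  {U : Type} [AddCommGroup U] [Module (ZMod p) U]
  (σU : U →ₗ[ZMod p] U)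
  (bU : Module.Basis (Fin b) (ZMod p) U)
  (bQ : Module.Basis (Fin c) (ZMod p) (U ⧸ LinearMap.range (σU - 1)))

/-- linear-forms embedding for `U` -/
noncomputable def LU (a : ℕ) : U →ₗ[ZMod p] MvPolynomial (Fin a ⊕ Fin b) (ZMod p) :=
  bU.constr (ZMod p) fun j => X (Sum.inr j)

noncomputable def LQ (a : ℕ) :
    (U ⧸ LinearMap.range (σU - 1)) →ₗ[ZMod p] MvPolynomial (Fin a ⊕ Fin c) (ZMod p) :=
  bQ.constr (ZMod p) fun k => X (Sum.inr k)

noncomputable def σA (a : ℕ) :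
    MvPolynomial (Fin a ⊕ Fin b) (ZMod p) →ₐ[ZMod p] MvPolynomial (Fin a ⊕ Fin b) (ZMod p) :=
  aeval (Sum.elim (fun i => X (Sum.inl i))
    (fun j => ∑ k, bU.repr (σU (bU j)) k • X (Sum.inr k)))

noncomputable def πA (a : ℕ) :
    MvPolynomial (Fin a ⊕ Fin b) (ZMod p) →ₐ[ZMod p] MvPolynomial (Fin a ⊕ Fin c) (ZMod p) :=
  aeval (Sum.elim (fun i => X (Sum.inl i))
    (fun j => ∑ k, bQ.repr ((LinearMap.range (σU - 1)).mkQ (bU j)) k • X (Sum.inr k)))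

theorem sum_repr_map {M N : Type*} [AddCommGroup M] [Module (ZMod p) M]
    [AddCommGroup N] [Module (ZMod p) N] {ι : Type*} [Fintype ι]
    (b : Module.Basis ι (ZMod p) M) (T : M →ₗ[ZMod p] N) (x : M) :
    ∑ j, b.repr x j • T (b j) = T x := by
  calc ∑ j, b.repr x j • T (b j) = T (∑ j, b.repr x j • b j) := by
        rw [map_sum]; simp_rw [map_smul]
    _ = T x := by rw [b.sum_repr]

theorem LU_apply (x : U) :
    LU bU a x = ∑ j, bU.repr x j • X (Sum.inr j) := by
  rw [LU, Module.Basis.constr_apply_fintype]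
  simp [Module.Basis.equivFun_apply]

theorem LQ_apply (x : U ⧸ LinearMap.range (σU - 1)) :
    LQ σU bQ a x = ∑ k, bQ.repr x k • X (Sum.inr k) := by
  rw [LQ, Module.Basis.constr_apply_fintype]
  simp [Module.Basis.equivFun_apply]

@[simp] theorem σA_X_inl (i : Fin a) :
    σA σU bU a (X (Sum.inl i)) = X (Sum.inl i) := by simp [σA]

theorem σA_X_inr (j : Fin b) :
    σA σU bU a (X (Sum.inr j)) = LU bU a (σU (bU j)) := by
  rw [LU_apply]; simp [σA]

@[simp] theorem πA_X_inl (i : Fin a) :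
    πA σU bU bQ a (X (Sum.inl i)) = X (Sum.inl i) := by simp [πA]

theorem πA_X_inr (j : Fin b) :
    πA σU bU bQ a (X (Sum.inr j)) =
      LQ σU bQ a ((LinearMap.range (σU - 1)).mkQ (bU j)) := by
  rw [LQ_apply]; simp [πA]

theorem σA_LU (x : U) : σA σU bU a (LU bU a x) = LU bU a (σU x) := by
  rw [LU_apply, map_sum]
  simp_rw [map_smul, σA_X_inr]
  exact sum_repr_map bU ((LU bU a).comp σU) x

theorem πA_LU (x : U) :
    πA σU bU bQ a (LU bU a x) =
      LQ σU bQ a ((LinearMap.range (σU - 1)).mkQ x) := by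
  rw [LU_apply, map_sum]
  simp_rw [map_smul, πA_X_inr]
  exact sum_repr_map bU ((LQ σU bQ a).comp ((LinearMap.range (σU - 1)).mkQ)) x

theorem mkQ_sigma (x : U) :
    (LinearMap.range (σU - 1)).mkQ (σU x) = (LinearMap.range (σU - 1)).mkQ x := by
  rw [← sub_eq_zero, ← map_sub, Submodule.mkQ_apply, Submodule.Quotient.mk_eq_zero]
  exact ⟨x, by simp⟩

theorem mkQ_pow (m : ℕ) (x : U) :
    (LinearMap.range (σU - 1)).mkQ ((σU ^ m) x) = (LinearMap.range (σU - 1)).mkQ x := by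
  induction m with
  | zero => simp
  | succ n ih =>
    rw [pow_succ', Module.End.mul_apply, mkQ_sigma]
    exact ih

theorem πA_σA : ∀ f, πA σU bU bQ a (σA σU bU a f) = πA σU bU bQ a f := by
  have : (πA σU bU bQ a).comp (σA σU bU a) = πA σU bU bQ a := by
    apply MvPolynomial.algHom_ext
    rintro (i | j)
    · simp
    · rw [AlgHom.comp_apply, σA_X_inr, πA_LU, πA_X_inr, mkQ_sigma]
  intro f
  exact DFunLike.congr_fun this f


theorem ker_le_range
    (hred : ¬ ∃ (W' U' : Submodule (ZMod p) U), IsCompl W' U' ∧ W' ≠ ⊥ ∧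
        (∀ w ∈ W', σU w = w) ∧ (∀ u ∈ U', σU u ∈ U')) :
    LinearMap.ker (σU - 1) ≤ LinearMap.range (σU - 1) := by
  intro u hu
  by_contra hun
  apply hred
  have hσu : σU u = u := by
    have := LinearMap.mem_ker.mp hu
    simp only [LinearMap.sub_apply, Module.End.one_apply, sub_eq_zero] at this
    exact this
  have hq : (LinearMap.range (σU - 1)).mkQ u ≠ 0 := by
    rw [Submodule.mkQ_apply, ne_eq, Submodule.Quotient.mk_eq_zero]
    exact hun
  obtain ⟨Cc, hC⟩ := Submodule.exists_isCompl
    (Submodule.span (ZMod p) {(LinearMap.range (σU - 1)).mkQ u})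
  refine ⟨Submodule.span (ZMod p) {u}, Cc.comap (LinearMap.range (σU - 1)).mkQ,
    ⟨?_, ?_⟩, ?_, ?_, ?_⟩
  · -- disjoint
    rw [Submodule.disjoint_def]
    intro x hx1 hx2
    obtain ⟨t, rfl⟩ := Submodule.mem_span_singleton.mp hx1
    have h1 : (LinearMap.range (σU - 1)).mkQ (t • u) ∈ Cc := Submodule.mem_comap.mp hx2
    have h2 : (LinearMap.range (σU - 1)).mkQ (t • u) ∈
        Submodule.span (ZMod p) {(LinearMap.range (σU - 1)).mkQ u} := by
      rw [map_smul]
      exact Submodule.smul_mem _ _ (Submodule.mem_span_singleton_self _)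
    have := Submodule.disjoint_def.mp hC.symm.disjoint _ h1 h2
    rw [map_smul] at this
    rcases smul_eq_zero.mp this with h | h
    · rw [h, zero_smul]
    · exact absurd h hq
  · -- codisjoint
    rw [codisjoint_iff_le_sup]
    intro v _
    have hv : (LinearMap.range (σU - 1)).mkQ v ∈
        Submodule.span (ZMod p) {(LinearMap.range (σU - 1)).mkQ u} ⊔ Cc := by
      rw [hC.sup_eq_top]; trivial
    obtain ⟨y, hy, z, hz, hyz⟩ := Submodule.mem_sup.mp hv
    obtain ⟨t, rfl⟩ := Submodule.mem_span_singleton.mp hy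
    refine Submodule.mem_sup.mpr ⟨t • u, Submodule.smul_mem _ _
      (Submodule.mem_span_singleton_self _), v - t • u, ?_, by abel⟩
    refine Submodule.mem_comap.mpr ?_
    have : (LinearMap.range (σU - 1)).mkQ (v - t • u) = z := by
      rw [map_sub, map_smul, ← hyz]; abel
    rw [this]; exact hz
  · -- ≠ ⊥
    rw [ne_eq, Submodule.span_singleton_eq_bot]
    intro h
    exact hun (h ▸ Submodule.zero_mem _)
  · intro w hw
    obtain ⟨t, rfl⟩ := Submodule.mem_span_singleton.mp hw
    rw [map_smul, hσu]
  · intro v hv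
    refine Submodule.mem_comap.mpr ?_
    rw [mkQ_sigma]
    exact Submodule.mem_comap.mp hv

theorem exists_delta (hk : LinearMap.ker (σU - 1) ≤ LinearMap.range (σU - 1)) (k : Fin c) :
    ∃ δ : U →ₗ[ZMod p] ZMod p,
      ∀ u, δ (σU u - u) = bQ.repr ((LinearMap.range (σU - 1)).mkQ u) k := by
  classical
  have hker_ψ : LinearMap.ker (σU - 1) ≤
      LinearMap.ker ((bQ.coord k).comp (LinearMap.range (σU - 1)).mkQ) := by
    intro u hu
    have hu' : u ∈ LinearMap.range (σU - 1) := hk hu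
    simp only [LinearMap.mem_ker, LinearMap.comp_apply, Submodule.mkQ_apply]
    rw [(Submodule.Quotient.mk_eq_zero _).mpr hu']
    simp
  have hinj : LinearMap.ker ((LinearMap.ker (σU - 1)).liftQ (σU - 1) le_rfl) = ⊥ :=
    Submodule.ker_liftQ_eq_bot _ _ _ le_rfl
  obtain ⟨g, hg⟩ := LinearMap.exists_leftInverse_of_injective _ hinj
  refine ⟨((LinearMap.ker (σU - 1)).liftQ
    ((bQ.coord k).comp (LinearMap.range (σU - 1)).mkQ) hker_ψ).comp g, fun u => ?_⟩
  have h1 : σU u - u = (σU - 1) u := by simp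
  have h2 : (σU - 1) u = ((LinearMap.ker (σU - 1)).liftQ (σU - 1) le_rfl)
      ((LinearMap.ker (σU - 1)).mkQ u) := by
    rw [Submodule.mkQ_apply, Submodule.liftQ_apply]
  rw [h1, h2, LinearMap.comp_apply]
  have h3 : g (((LinearMap.ker (σU - 1)).liftQ (σU - 1) le_rfl)
      ((LinearMap.ker (σU - 1)).mkQ u)) = (LinearMap.ker (σU - 1)).mkQ u := by
    have := DFunLike.congr_fun hg ((LinearMap.ker (σU - 1)).mkQ u)
    simpa using this
  rw [h3, Submodule.mkQ_apply, Submodule.liftQ_apply]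
  simp [Module.Basis.coord_apply]

theorem key_pderiv (k : Fin c) (δ : U →ₗ[ZMod p] ZMod p)
    (hδ : ∀ u, δ (σU u - u) = bQ.repr ((LinearMap.range (σU - 1)).mkQ u) k)
    (f : MvPolynomial (Fin a ⊕ Fin b) (ZMod p)) (hf : σA σU bU a f = f) :
    pderiv (Sum.inr k) (πA σU bU bQ a f) = 0 := by
  classical
  letI : Algebra (MvPolynomial (Fin a ⊕ Fin b) (ZMod p))
      (MvPolynomial (Fin a ⊕ Fin c) (ZMod p)) := (πA σU bU bQ a).toRingHom.toAlgebra
  haveI : IsScalarTower (ZMod p) (MvPolynomial (Fin a ⊕ Fin b) (ZMod p))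
      (MvPolynomial (Fin a ⊕ Fin c) (ZMod p)) :=
    IsScalarTower.of_algebraMap_eq' (πA σU bU bQ a).comp_algebraMap.symm
  set D1 : Derivation (ZMod p) (MvPolynomial (Fin a ⊕ Fin b) (ZMod p))
      (MvPolynomial (Fin a ⊕ Fin c) (ZMod p)) :=
    mkDerivation (ZMod p) (Sum.elim (fun _ => (0 : MvPolynomial (Fin a ⊕ Fin c) (ZMod p)))
      (fun j => C (δ (bU j)))) with hD1
  have hsmul : ∀ (r : MvPolynomial (Fin a ⊕ Fin b) (ZMod p))
      (s : MvPolynomial (Fin a ⊕ Fin c) (ZMod p)), r • s = πA σU bU bQ a r * s :=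
    fun r s => rfl
  have hD1LU : ∀ v, D1 (LU bU a v) = C (δ v) := by
    intro v
    rw [LU_apply, show (D1 (∑ j, bU.repr v j • X (Sum.inr j))) =
      D1.toLinearMap (∑ j, bU.repr v j • X (Sum.inr j)) from rfl, map_sum]
    simp_rw [LinearMap.map_smul]
    have : ∀ j : Fin b, D1.toLinearMap (X (Sum.inr j)) = C (δ (bU j)) := fun j =>
      mkDerivation_X _ _ _
    simp_rw [this]
    have hstep : ∀ j : Fin b, bU.repr v j • (C (δ (bU j)) :
        MvPolynomial (Fin a ⊕ Fin c) (ZMod p)) = C (bU.repr v j * δ (bU j)) := fun j => by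
      rw [smul_eq_C_mul, ← C_mul]
    rw [Finset.sum_congr rfl fun j _ => hstep j, ← map_sum]
    congr 1
    calc ∑ j, bU.repr v j * δ (bU j) = ∑ j, bU.repr v j • δ (bU j) := rfl
      _ = δ v := sum_repr_map bU δ v
  have hpdLQ : ∀ v, pderiv (Sum.inr k) (LQ σU bQ a v) = C (bQ.repr v k) := by
    intro v
    rw [LQ_apply, map_sum]
    simp_rw [Derivation.map_smul]
    have : ∀ k' : Fin c, pderiv (R := ZMod p) (Sum.inr (α := Fin a) k) (X (Sum.inr k')) =
        if k' = k then 1 else 0 := by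
      intro k'
      rcases eq_or_ne k' k with h | h
      · subst h; simp [pderiv_X_self]
      · rw [if_neg h, pderiv_X_of_ne (by simpa using h)]
    simp_rw [this]
    simp only [smul_ite, smul_zero]
    rw [Finset.sum_ite_eq' Finset.univ k fun k' => bQ.repr v k' • (1:MvPolynomial (Fin a ⊕ Fin c) (ZMod p))]
    rw [if_pos (Finset.mem_univ k)]
    rw [smul_eq_C_mul, mul_one]
  have hvar : ∀ v, D1 (σA σU bU a (X v)) =
      D1 (X v) + pderiv (Sum.inr k) (πA σU bU bQ a (X v)) := by
    rintro (i | j)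
    · rw [σA_X_inl, πA_X_inl]
      have h0 : D1 (X (Sum.inl i : Fin a ⊕ Fin b)) = 0 := mkDerivation_X _ _ _
      rw [h0, pderiv_X_of_ne (by simp), add_zero]
    · rw [σA_X_inr, πA_X_inr, hD1LU, hpdLQ]
      have h0 : D1 (X (Sum.inr j : Fin a ⊕ Fin b)) = C (δ (bU j)) := mkDerivation_X _ _ _
      rw [h0, ← C_add]
      congr 1
      have := hδ (bU j)
      rw [map_sub] at this
      linear_combination this
  have key : ∀ g, D1 (σA σU bU a g) = D1 g + pderiv (Sum.inr k) (πA σU bU bQ a g) := by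
    intro g
    induction g using MvPolynomial.induction_on with
    | C r => simp
    | add f g hf hg =>
      rw [map_add, map_add, map_add, map_add, map_add, hf, hg]
      ring
    | mul_X g v hg =>
      rw [map_mul, Derivation.leibniz, Derivation.leibniz, map_mul, Derivation.leibniz,
        hsmul, hsmul, hsmul, hsmul, πA_σA, πA_σA, hg, hvar v]
      simp only [smul_eq_mul]
      ring
  have hkey := key f
  rw [hf] at hkey
  exact (left_eq_add.mp hkey)

theorem support_dvd {τ : Type} [DecidableEq τ] (g : MvPolynomial τ (ZMod p)) (i : τ)
    (h : pderiv i g = 0) (m : τ →₀ ℕ) (hm : m ∈ g.support) : p ∣ m i := by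
  classical
  rcases Nat.eq_zero_or_pos (m i) with h0 | hpos
  · simp [h0]
  · have hne : coeff m g ≠ 0 := mem_support_iff.mp hm
    have hc : coeff (m - Finsupp.single i 1) (pderiv i g) =
        coeff m g * (m i : ZMod p) := by
      conv_lhs => rw [← support_sum_monomial_coeff g]
      rw [map_sum]
      simp_rw [pderiv_monomial, coeff_sum, coeff_monomial]
      rw [Finset.sum_eq_single m]
      · rw [if_pos rfl]
      · intro m' hm' hne'
        split_ifs with heq
        · rcases Nat.eq_zero_or_pos (m' i) with h0' | hpos'
          · rw [h0']; simp
        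
          · exfalso
            apply hne'
            ext j
            have hj := DFunLike.congr_fun heq j
            simp only [Finsupp.tsub_apply, Finsupp.single_apply] at hj
            by_cases hij : i = j
            · subst hij
              rw [if_pos rfl] at hj
              omega
            · rw [if_neg hij] at hj
              omega
        · rfl
      · intro hmm; exact absurd hm hmm
    rw [h] at hc
    simp only [coeff_zero] at hc
    rcases mul_eq_zero.mp hc.symm with h' | h'
    · exact absurd h' hne
    · exact (ZMod.natCast_eq_zero_iff _ _).mp h'

theorem mem_adjoin {g : MvPolynomial (Fin a ⊕ Fin c) (ZMod p)}
    (h : ∀ k, pderiv (Sum.inr k) g = 0) :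
    g ∈ Algebra.adjoin (ZMod p)
        ((Set.range fun i : Fin a =>
            (X (Sum.inl i) : MvPolynomial (Fin a ⊕ Fin c) (ZMod p))) ∪
          {f | ∃ w : Fin c → ZMod p,
              f = (∑ k, w k • (X (Sum.inr k) :
                  MvPolynomial (Fin a ⊕ Fin c) (ZMod p))) ^ p}) := by
  classical
  set A := Algebra.adjoin (ZMod p)
        ((Set.range fun i : Fin a =>
            (X (Sum.inl i) : MvPolynomial (Fin a ⊕ Fin c) (ZMod p))) ∪
          {f | ∃ w : Fin c → ZMod p,
              f = (∑ k, w k • (X (Sum.inr k) :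
                  MvPolynomial (Fin a ⊕ Fin c) (ZMod p))) ^ p}) with hA
  have hXp : ∀ k, (X (Sum.inr k) : MvPolynomial (Fin a ⊕ Fin c) (ZMod p)) ^ p ∈ A := by
    intro k
    have hsum : (∑ k', (if k' = k then (1 : ZMod p) else 0) •
        (X (Sum.inr k') : MvPolynomial (Fin a ⊕ Fin c) (ZMod p))) = X (Sum.inr k) := by
      simp [ite_smul]
    refine Algebra.subset_adjoin (Set.mem_union_right _ ?_)
    exact ⟨fun k' => if k' = k then 1 else 0, by rw [hsum]⟩
  rw [← support_sum_monomial_coeff g]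
  refine Subalgebra.sum_mem _ fun m hm => ?_
  rw [monomial_eq]
  refine Subalgebra.mul_mem _ ?_ ?_
  · rw [show (C (coeff m g) : MvPolynomial (Fin a ⊕ Fin c) (ZMod p)) =
      algebraMap (ZMod p) (MvPolynomial (Fin a ⊕ Fin c) (ZMod p)) (coeff m g) from rfl]
    exact A.algebraMap_mem _
  · rw [Finsupp.prod]
    refine Subalgebra.prod_mem _ fun v hv => ?_
    rcases v with i | k
    · refine Subalgebra.pow_mem _
        (Algebra.subset_adjoin (Set.mem_union_left _ ?_)) _
      exact Set.mem_range_self i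
    · obtain ⟨t, ht⟩ := support_dvd g _ (h k) m hm
      rw [ht, pow_mul]
      exact Subalgebra.pow_mem _ (hXp k) _

theorem exists_inv_lift (hσp : σU ^ p = 1) (w : Fin c → ZMod p) :
    ∃ f, σA σU bU a f = f ∧
      πA σU bU bQ a f = (∑ k, w k • (X (Sum.inr k) :
        MvPolynomial (Fin a ⊕ Fin c) (ZMod p))) ^ p := by
  haveI : NeZero p := ⟨(Fact.out : p.Prime).ne_zero⟩
  obtain ⟨u, hu⟩ := Submodule.mkQ_surjective (LinearMap.range (σU - 1)) (∑ k, w k • bQ k)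
  refine ⟨∏ i : ZMod p, LU bU a ((σU ^ i.val) u), ?_, ?_⟩
  · rw [map_prod]
    have hterm : ∀ i : ZMod p, σA σU bU a (LU bU a ((σU ^ i.val) u)) =
        LU bU a ((σU ^ (i + 1).val) u) := by
      intro i
      rw [σA_LU]
      congr 1
      have h1 : σU ((σU ^ i.val) u) = (σU ^ (i.val + 1)) u := by
        rw [pow_succ']
        rfl
      rw [h1]
      congr 1
      rw [pow_eq_pow_mod (i.val + 1) hσp]
      rw [show (i + 1 : ZMod p).val = (i.val + 1) % p by
        rw [ZMod.val_add, ZMod.val_one _]]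
    rw [Finset.prod_congr rfl fun i _ => hterm i]
    exact Equiv.prod_comp (Equiv.addRight (1 : ZMod p))
      (fun z => LU bU a ((σU ^ z.val) u))
  · rw [map_prod]
    have hterm : ∀ i : ZMod p, πA σU bU bQ a (LU bU a ((σU ^ i.val) u)) =
        ∑ k, w k • (X (Sum.inr k) : MvPolynomial (Fin a ⊕ Fin c) (ZMod p)) := by
      intro i
      rw [πA_LU, mkQ_pow, hu]
      rw [map_sum]
      simp_rw [map_smul]
      congr 1
      ext k
      congr 1
      rw [LQ, Module.Basis.constr_basis]
    rw [Finset.prod_congr rfl fun i _ => hterm i, Finset.prod_const, Finset.card_univ,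
      ZMod.card]

theorem main (hσp : σU ^ p = 1)
    (hred : ¬ ∃ (W' U' : Submodule (ZMod p) U), IsCompl W' U' ∧ W' ≠ ⊥ ∧
        (∀ w ∈ W', σU w = w) ∧ (∀ u ∈ U', σU u ∈ U')) :
    {g : MvPolynomial (Fin a ⊕ Fin c) (ZMod p) |
        ∃ f, σA σU bU a f = f ∧ πA σU bU bQ a f = g} =
      ↑(Algebra.adjoin (ZMod p)
          ((Set.range fun i : Fin a =>
              (X (Sum.inl i) : MvPolynomial (Fin a ⊕ Fin c) (ZMod p))) ∪
            {f | ∃ w : Fin c → ZMod p,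
                f = (∑ k, w k • (X (Sum.inr k) :
                    MvPolynomial (Fin a ⊕ Fin c) (ZMod p))) ^ p})) := by
  have hset : {g : MvPolynomial (Fin a ⊕ Fin c) (ZMod p) |
      ∃ f, σA σU bU a f = f ∧ πA σU bU bQ a f = g} =
      ↑((AlgHom.equalizer (σA σU bU a)
          (AlgHom.id (ZMod p) (MvPolynomial (Fin a ⊕ Fin b) (ZMod p)))).map
            (πA σU bU bQ a)) := by
    ext g
    simp only [Set.mem_setOf_eq, SetLike.mem_coe, Subalgebra.mem_map,
      AlgHom.mem_equalizer, AlgHom.id_apply]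
  rw [hset, SetLike.coe_set_eq]
  apply le_antisymm
  · rintro g hg
    rw [Subalgebra.mem_map] at hg
    obtain ⟨f, hfmem, rfl⟩ := hg
    have hfinv : σA σU bU a f = f := hfmem
    apply mem_adjoin
    intro k
    obtain ⟨δ, hδ⟩ := exists_delta σU bQ (ker_le_range σU hred) k
    exact key_pderiv σU bU bQ k δ hδ f hfinv
  · apply Algebra.adjoin_le
    rintro x hx
    rcases hx with ⟨i, rfl⟩ | ⟨w, rfl⟩
    · simp only [SetLike.mem_coe, Subalgebra.mem_map]
      refine ⟨X (Sum.inl i), ?_, πA_X_inl σU bU bQ i⟩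
      rw [AlgHom.mem_equalizer, σA_X_inl, AlgHom.id_apply]
    · simp only [SetLike.mem_coe, Subalgebra.mem_map]
      obtain ⟨f, hfi, hfp⟩ := exists_inv_lift σU bU bQ hσp w
      exact ⟨f, (AlgHom.mem_equalizer _ _ _).mpr (by rw [hfi, AlgHom.id_apply]), hfp⟩

end Stmt4Aux

/-- Theorem (invariants): let `V = W ⊕ U` be a finite-dimensional `F_p[Z/p]`-module with
`W` trivial (of rank `a`) and `U` reduced (no trivial direct summand), given by
`σU : U → U` with `σU^p = 1`.  Identify `S(V)` with the polynomial ring on variables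
`Sum.inl i` (a basis of `W`) and `Sum.inr j` (the basis `bU` of `U`), with the induced
`Z/p`-action, and identify `S(V_{Z/p}) = S(W ⊕ U_{Z/p})` with the polynomial ring on
variables `Sum.inl i` and `Sum.inr k` (the basis `bQ` of `U_{Z/p} = U/rad(U)`), the
surjection `S(V) → S(V_{Z/p})` being induced by the quotient map `U → U_{Z/p}`.
Then the image of the invariant ring `S(V)^{Z/p}` in `S(V_{Z/p})` is exactly
`S(W ⊕ Φ(U_{Z/p}))`, the subalgebra generated by `W` and the `p`-th powers of the
elements of `U_{Z/p}`. -/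
theorem stmt4 (p : ℕ) [Fact p.Prime] (a b c : ℕ)
    (U : Type) [AddCommGroup U] [Module (ZMod p) U] [FiniteDimensional (ZMod p) U]
    (σU : U →ₗ[ZMod p] U) (hσp : σU ^ p = 1)
    (hred : ¬ ∃ (W' U' : Submodule (ZMod p) U), IsCompl W' U' ∧ W' ≠ ⊥ ∧
        (∀ w ∈ W', σU w = w) ∧ (∀ u ∈ U', σU u ∈ U'))
    (bU : Module.Basis (Fin b) (ZMod p) U)
    (bQ : Module.Basis (Fin c) (ZMod p) (U ⧸ LinearMap.range (σU - 1))) :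
    {g : MvPolynomial (Fin a ⊕ Fin c) (ZMod p) |
        ∃ f : MvPolynomial (Fin a ⊕ Fin b) (ZMod p),
          aeval (Sum.elim
              (fun i => (X (Sum.inl i) : MvPolynomial (Fin a ⊕ Fin b) (ZMod p)))
              (fun j => ∑ k, bU.repr (σU (bU j)) k • X (Sum.inr k))) f = f ∧
          aeval (Sum.elim
              (fun i => (X (Sum.inl i) : MvPolynomial (Fin a ⊕ Fin c) (ZMod p)))
              (fun j => ∑ k, bQ.repr ((LinearMap.range (σU - 1)).mkQ (bU j)) k •
                  X (Sum.inr k))) f = g} =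
      ↑(Algebra.adjoin (ZMod p)
          ((Set.range fun i : Fin a =>
              (X (Sum.inl i) : MvPolynomial (Fin a ⊕ Fin c) (ZMod p))) ∪
            {f | ∃ w : Fin c → ZMod p,
                f = (∑ k, w k • (X (Sum.inr k) :
                    MvPolynomial (Fin a ⊕ Fin c) (ZMod p))) ^ p})) :=
  Stmt4Aux.main σU bU bQ hσp hred
end

section
/- Let p be a prime and V a finite-dimensional F_p[Z/p]-module filtered by submodules V(0) ⊆ V(1) ⊆ ... ⊆ V(n) = V such that rad(V) ⊆ V(0). Then there exists a direct sum decomposition V = W ⊕ U of filtered F_p[Z/p]-modules (i.e. V(k) = (W ∩ V(k)) ⊕ (U ∩ V(k)) for all k) with W a trivial module and U reduced. -/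
open Submodule

section Aux

variable {𝕜 V : Type*} [DivisionRing 𝕜] [AddCommGroup V] [Module 𝕜 V]

/-- Complement of a subspace inside a larger subspace. -/
lemma aux_compl_in (T A : Submodule 𝕜 V) (h : A ≤ T) :
    ∃ B, B ≤ T ∧ A ⊓ B = ⊥ ∧ A ⊔ B = T := by
  obtain ⟨B0, hB0⟩ := A.exists_isCompl
  refine ⟨B0 ⊓ T, inf_le_right, ?_, ?_⟩
  · rw [← inf_assoc, hB0.inf_eq_bot, bot_inf_eq]
  · rw [← sup_inf_assoc_of_le _ h, hB0.sup_eq_top, top_inf_eq]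

/-- A complement adapted to a filtration, containing a prescribed subspace of the
bottom filtration step. -/
lemma aux_filtered_compl :
    ∀ (n : ℕ) (T : Submodule 𝕜 V) (G : ℕ → Submodule 𝕜 V), Monotone G →
    (∀ k, G k ≤ T) → G n = T →
    ∀ (A C : Submodule 𝕜 V), A ≤ T → C ≤ G 0 → A ⊓ C = ⊥ →
    ∃ W, C ≤ W ∧ W ≤ T ∧ A ⊓ W = ⊥ ∧ A ⊔ W = T ∧
      ∀ k, G k = (A ⊓ G k) ⊔ (W ⊓ G k) := by
  intro n
  induction n with
  | zero =>
    intro T G hmono hle htop A C hAT hC0 hAC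
    obtain ⟨D, hDT, hD1, hD2⟩ := aux_compl_in T (A ⊔ C)
      (sup_le hAT (hC0.trans htop.le))
    have hsupT : A ⊔ (C ⊔ D) = T := by rw [← sup_assoc, hD2]
    have hWT : C ⊔ D ≤ T := sup_le (hC0.trans htop.le) hDT
    have hdisj : A ⊓ (C ⊔ D) = ⊥ := by
      rw [eq_bot_iff]
      rintro x ⟨hxA, hxW⟩
      obtain ⟨c, hc, d, hd, hcd⟩ := mem_sup.mp hxW
      have hdmem : d ∈ (A ⊔ C) ⊓ D := by
        refine ⟨?_, hd⟩
        have : d = x - c := by rw [← hcd]; abel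
        rw [this]
        exact sub_mem (mem_sup_left hxA) (mem_sup_right hc)
      rw [hD1] at hdmem
      have hd0 : d = 0 := hdmem
      have hxc : x = c := by rw [← hcd, hd0, add_zero]
      have : x ∈ A ⊓ C := ⟨hxA, hxc ▸ hc⟩
      rw [hAC] at this
      exact this
    refine ⟨C ⊔ D, le_sup_left, hWT, hdisj, hsupT, ?_⟩
    intro k
    have hGk : G k = T := le_antisymm (hle k) (htop ▸ hmono (Nat.zero_le k))
    rw [hGk, inf_eq_left.mpr hAT, inf_eq_left.mpr hWT, hsupT]
  | succ n ih =>
    intro T G hmono hle htop A C hAT hC0 hAC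
    obtain ⟨W', hCW', hW'T, hW'1, hW'2, hW'filt⟩ :=
      ih (G n) (fun k => G (min k n))
        (fun a b hab => hmono (min_le_min_right n hab))
        (fun k => hmono (min_le_right k n))
        (by simp)
        (A ⊓ G n) C inf_le_right
        (by simpa using hC0)
        (by rw [eq_bot_iff, ← hAC]; exact inf_le_inf_right C inf_le_left)
    obtain ⟨D, hDT, hD1, hD2⟩ := aux_compl_in T (A ⊔ G n) (sup_le hAT (hle n))
    have hAW' : A ⊔ W' = A ⊔ G n := by
      apply le_antisymm (sup_le le_sup_left (hW'T.trans le_sup_right))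
      refine sup_le le_sup_left ?_
      rw [← hW'2]
      exact sup_le (inf_le_left.trans le_sup_left) le_sup_right
    have hsupT : A ⊔ (W' ⊔ D) = T := by rw [← sup_assoc, hAW', hD2]
    have hWT : W' ⊔ D ≤ T := sup_le (hW'T.trans (hle n)) hDT
    have hdisj : A ⊓ (W' ⊔ D) = ⊥ := by
      rw [eq_bot_iff]
      rintro x ⟨hxA, hxW⟩
      obtain ⟨w, hw, d, hd, hwd⟩ := mem_sup.mp hxW
      have hdmem : d ∈ (A ⊔ G n) ⊓ D := by
        refine ⟨?_, hd⟩
        have : d = x - w := by rw [← hwd]; abel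
        rw [this]
        exact sub_mem (mem_sup_left hxA) (mem_sup_right (hW'T hw))
      rw [hD1] at hdmem
      have hd0 : d = 0 := hdmem
      have hxw : x = w := by rw [← hwd, hd0, add_zero]
      have : x ∈ (A ⊓ G n) ⊓ W' := ⟨⟨hxA, hxw ▸ hW'T hw⟩, hxw ▸ hw⟩
      rw [hW'1] at this
      exact this
    refine ⟨W' ⊔ D, hCW'.trans le_sup_left, hWT, hdisj, hsupT, ?_⟩
    intro k
    rcases le_or_gt k n with h | h
    · have hthis := hW'filt k
      rw [min_eq_left h] at hthis
      have hA' : A ⊓ G n ⊓ G k = A ⊓ G k := by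
        rw [inf_assoc, inf_eq_right.mpr (hmono h)]
      rw [hA'] at hthis
      apply le_antisymm
      · calc G k = (A ⊓ G k) ⊔ (W' ⊓ G k) := hthis
          _ ≤ (A ⊓ G k) ⊔ ((W' ⊔ D) ⊓ G k) :=
            sup_le_sup le_rfl (inf_le_inf_right _ le_sup_left)
      · exact sup_le inf_le_right inf_le_right
    · have hGk : G k = T := le_antisymm (hle k) (htop ▸ hmono h)
      rw [hGk, inf_eq_left.mpr hAT, inf_eq_left.mpr hWT, hsupT]

end Aux

/-- If a finite-dimensional `F_p[Z/p]`-module `V` (given by `σ` with `σ^p = 1`) carries a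
filtration `V(0) ⊆ V(1) ⊆ … ⊆ V(n) = V` by submodules with `rad(V) = range (σ - 1) ⊆ V(0)`,
then there is a direct sum decomposition `V = W ⊕ U` of filtered `F_p[Z/p]`-modules
(`V(k) = (W ∩ V(k)) ⊕ (U ∩ V(k))` for all `k`) with `W` trivial and `U` reduced. -/
theorem stmt5 (p : ℕ) [Fact p.Prime] (V : Type) [AddCommGroup V] [Module (ZMod p) V]
    [FiniteDimensional (ZMod p) V] (σ : V →ₗ[ZMod p] V) (hσ : σ ^ p = 1)
    (n : ℕ) (F : ℕ → Submodule (ZMod p) V) (hmono : Monotone F)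
    (hinv : ∀ k, ∀ v ∈ F k, σ v ∈ F k) (htop : F n = ⊤)
    (hrad : LinearMap.range (σ - 1) ≤ F 0) :
    ∃ W U : Submodule (ZMod p) V, IsCompl W U ∧
      (∀ w ∈ W, σ w = w) ∧ (∀ u ∈ U, σ u ∈ U) ∧
      (¬ ∃ (W' U' : Submodule (ZMod p) V), W' ≤ U ∧ U' ≤ U ∧ W' ⊓ U' = ⊥ ∧ W' ⊔ U' = U ∧
          W' ≠ ⊥ ∧ (∀ w ∈ W', σ w = w) ∧ (∀ u ∈ U', σ u ∈ U')) ∧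
      (∀ k, F k = (W ⊓ F k) ⊔ (U ⊓ F k)) := by
  classical
  set K := LinearMap.ker (σ - 1) with hK
  set R := LinearMap.range (σ - 1) with hR
  have hmemK : ∀ v : V, v ∈ K ↔ σ v = v := by
    intro v
    simp [hK, LinearMap.mem_ker, LinearMap.sub_apply, sub_eq_zero]
  -- choose W: a complement of K ⊓ R inside K
  obtain ⟨W, hWK, hWdisj, hWsup⟩ := aux_compl_in K (K ⊓ R) inf_le_left
  have hWR : W ⊓ R = ⊥ := by
    rw [eq_bot_iff, ← hWdisj]
    rintro x ⟨hxW, hxR⟩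
    exact ⟨⟨hWK hxW, hxR⟩, hxW⟩
  -- choose U: a filtered complement of W containing R
  obtain ⟨U, hRU, -, hUdisj, hUsup, hUfilt⟩ :=
    aux_filtered_compl n ⊤ F hmono (fun k => le_top) htop W R le_top hrad hWR
  have hsub : ∀ v : V, (σ - 1) v = σ v - v := by
    intro v; simp [LinearMap.sub_apply]
  refine ⟨W, U, ⟨disjoint_iff.mpr hUdisj, codisjoint_iff.mpr hUsup⟩, ?_, ?_, ?_, hUfilt⟩
  · intro w hw
    exact (hmemK w).mp (hWK hw)
  · intro u hu
    have h1 : (σ - 1) u ∈ U := hRU ⟨u, rfl⟩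
    have h2 : σ u = u + (σ - 1) u := by rw [hsub]; abel
    rw [h2]
    exact U.add_mem hu h1
  · rintro ⟨W', U', hW'U, hU'U, hd, hs, hne, hfix, hinv'⟩
    apply hne
    rw [eq_bot_iff]
    intro x hx
    have hxU : x ∈ U := hW'U hx
    have hxK : x ∈ K := (hmemK x).mpr (hfix x hx)
    -- x ∈ R
    have hxR : x ∈ R := by
      have hx2 : x ∈ (K ⊓ R) ⊔ W := by rw [hWsup]; exact hxK
      obtain ⟨r, hr, w, hw, hrw⟩ := mem_sup.mp hx2
      have hwU : w ∈ U := by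
        have hwe : w = x - r := by rw [← hrw]; abel
        rw [hwe]
        exact sub_mem hxU (hRU hr.2)
      have hw0 : w = 0 := by
        have : w ∈ W ⊓ U := ⟨hw, hwU⟩
        rwa [hUdisj] at this
      have : x = r := by rw [← hrw, hw0, add_zero]
      rw [this]
      exact hr.2
    -- x = (σ - 1) u for some u ∈ U
    obtain ⟨v, hv⟩ := hxR
    obtain ⟨w, hw, u, hu, hwu⟩ := mem_sup.mp (hUsup ▸ (mem_top : v ∈ (⊤ : Submodule (ZMod p) V)))
    have hw0 : (σ - 1) w = 0 := by
      rw [hsub, (hmemK w).mp (hWK hw), sub_self]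
    have hxu : x = (σ - 1) u := by
      calc x = (σ - 1) v := hv.symm
        _ = (σ - 1) (w + u) := by rw [hwu]
        _ = (σ - 1) w + (σ - 1) u := map_add _ _ _
        _ = (σ - 1) u := by rw [hw0, zero_add]
    -- decompose u in W' ⊔ U'
    rw [← hs] at hu
    obtain ⟨w'', hw'', u'', hu'', h2⟩ := mem_sup.mp hu
    have hw''0 : (σ - 1) w'' = 0 := by
      rw [hsub, hfix w'' hw'', sub_self]
    have hxU' : x ∈ U' := by
      have : x = (σ - 1) u'' := by
        calc x = (σ - 1) u := hxu
          _ = (σ - 1) (w'' + u'') := by rw [h2]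
          _ = (σ - 1) w'' + (σ - 1) u'' := map_add _ _ _
          _ = (σ - 1) u'' := by rw [hw''0, zero_add]
      rw [this, hsub]
      exact sub_mem (hinv' u'' hu'') hu''
    have : x ∈ W' ⊓ U' := ⟨hx, hxU'⟩
    rwa [hd] at this
end

section
/- Let p be a prime, V a finite-dimensional F_p-vector space, and F a filtration V(0) ⊆ V(1) ⊆ ... ⊆ V(n) = V. Define e(F) = Σ_k c_k (2p^k − 1), where c_k = dim V(k)/V(k−1). If ρ is a faithful complex representation of the elementary abelian p-group C dual to V, given by distinct characters v_1,...,v_m spanning V with multiplicities n_1,...,n_m, and F_ρ is the filtration with V(i) the span of those v_j with p^{i+1} not dividing n_j, then e(F_ρ) ≤ 2n − c, where n = n_1 + ... + n_m and c = dim V. -/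
/-- Let `C` be an elementary abelian `p`-group of rank `c` and `V` its `F_p`-vector space
of characters (an abstract `F_p`-space of dimension `c = finrank V`).  Let `ρ` be a
faithful complex representation of `C` given by distinct characters `v_1,…,v_m ∈ V`
spanning `V`, with multiplicities `n_1,…,n_m ≥ 1`, of total dimension `n = Σ n_j`.
Let `F_ρ` be the filtration of `V` with `V(i)` the span of those `v_j` with
`p^{i+1} ∤ n_j` (the filtration is exhausted by stage `B` whenever `n_j < p^{B+1}` for
all `j`).  Then `e(F_ρ) = Σ_k c_k (2p^k - 1) ≤ 2n - c`, where
`c_k = dim V(k)/V(k-1)`. -/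
theorem stmt6 (p : ℕ) [Fact p.Prime] (V : Type) [AddCommGroup V] [Module (ZMod p) V]
    [FiniteDimensional (ZMod p) V]
    (m : ℕ) (v : Fin m → V) (hinj : Function.Injective v)
    (hspan : Submodule.span (ZMod p) (Set.range v) = ⊤)
    (nmul : Fin m → ℕ) (hpos : ∀ j, 0 < nmul j)
    (B : ℕ) (hB : ∀ j, nmul j < p ^ (B + 1))
    (d : ℕ → ℕ)
    (hd : ∀ i, d i = Module.finrank (ZMod p)
        ↥(Submodule.span (ZMod p) {x | ∃ j, ¬ ((p : ℕ) ^ (i + 1) ∣ nmul j) ∧ x = v j})) :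
    (∑ k ∈ Finset.range (B + 1),
        (d k - (if k = 0 then 0 else d (k - 1))) * (2 * p ^ k - 1)) ≤
      2 * (∑ j, nmul j) - Module.finrank (ZMod p) V := by
  classical
  have hp : p.Prime := Fact.out
  set e : Fin m → ℕ := fun j => (nmul j).factorization p with he
  have hdvd : ∀ j k, p ^ k ∣ nmul j ↔ k ≤ e j := fun j k =>
    hp.pow_dvd_iff_le_factorization (hpos j).ne'
  have hSet : ∀ i, {x | ∃ j, ¬ ((p:ℕ) ^ (i + 1) ∣ nmul j) ∧ x = v j}
      = v '' {j | e j ≤ i} := by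
    intro i
    ext x
    simp only [Set.mem_setOf_eq, Set.mem_image, hdvd]
    constructor
    · rintro ⟨j, h1, rfl⟩; exact ⟨j, by omega, rfl⟩
    · rintro ⟨j, h1, rfl⟩; exact ⟨j, by omega, rfl⟩
  have hd' : ∀ i, d i = Module.finrank (ZMod p)
      ↥(Submodule.span (ZMod p) (v '' {j | e j ≤ i})) := by
    intro i; rw [hd i, hSet i]
  -- e j ≤ B and p ^ e j ≤ nmul j
  have hele : ∀ j, p ^ e j ≤ nmul j := fun j =>
    Nat.le_of_dvd (hpos j) ((hdvd j (e j)).mpr le_rfl)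
  have heB : ∀ j, e j ≤ B := by
    intro j
    have h1 : p ^ e j < p ^ (B + 1) := lt_of_le_of_lt (hele j) (hB j)
    have := (Nat.pow_lt_pow_iff_right hp.one_lt).mp h1
    omega
  -- fibers
  set F : ℕ → Finset (Fin m) := fun k => Finset.univ.filter (fun j => e j = k) with hF
  set t : ℕ → ℕ := fun k => (F k).card with ht
  -- d is bounded: d k ≤ (if k = 0 then 0 else d (k-1)) + t k
  have hsuple : ∀ a b : Submodule (ZMod p) V,
      Module.finrank (ZMod p) ↥(a ⊔ b) ≤
        Module.finrank (ZMod p) a + Module.finrank (ZMod p) b := by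
    intro a b
    have h := Submodule.finrank_sup_add_finrank_inf_eq a b
    omega
  have hspanF : ∀ k, Module.finrank (ZMod p)
      ↥(Submodule.span (ZMod p) (v '' ((F k : Set (Fin m))))) ≤ t k := by
    intro k
    have h1 : v '' ((F k : Set (Fin m))) = (((F k).image v : Finset V) : Set V) := by
      simp [Finset.coe_image]
    rw [h1]
    exact le_trans (finrank_span_finset_le_card ((F k).image v))
      (Finset.card_image_le)
  have hkey : ∀ k, d k ≤ (if k = 0 then 0 else d (k - 1)) + t k := by
    intro k
    match k with
    | 0 =>
      have h0 : (if (0:ℕ) = 0 then 0 else d (0 - 1)) = 0 := if_pos rfl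
      rw [h0, Nat.zero_add, hd' 0]
      have h1 : {j : Fin m | e j ≤ 0} = (F 0 : Set (Fin m)) := by
        ext j; simp [hF, Nat.le_zero]
      rw [h1]
      exact hspanF 0
    | (k+1) =>
      simp only [Nat.add_sub_cancel, if_neg (Nat.succ_ne_zero k)]
      rw [hd' (k+1), hd' k]
      have h1 : {j : Fin m | e j ≤ k + 1} = {j : Fin m | e j ≤ k} ∪ (F (k+1) : Set (Fin m)) := by
        ext j; simp [hF]; omega
      rw [h1, Set.image_union, Submodule.span_union]
      exact le_trans (hsuple _ _) (Nat.add_le_add le_rfl (hspanF (k+1)))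
  -- d B = finrank V
  have hdB : d B = Module.finrank (ZMod p) V := by
    rw [hd' B]
    have h1 : {j : Fin m | e j ≤ B} = Set.univ := by
      ext j; simp [heB j]
    rw [h1, Set.image_univ, hspan, finrank_top]
  -- d monotone
  have hdmono : Monotone d := by
    apply monotone_nat_of_le_succ
    intro k
    rw [hd' k, hd' (k+1)]
    exact Submodule.finrank_mono (Submodule.span_mono
      (Set.image_mono (fun j hj => le_trans hj (Nat.le_succ k))))
  -- telescoping
  set f : ℕ → ℕ := fun k => if k = 0 then 0 else d (k - 1) with hf
  have hfmono : Monotone f := by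
    intro a b hab
    by_cases ha : a = 0
    · simp [hf, ha]
    · have hb : b ≠ 0 := by omega
      simp only [hf, if_neg ha, if_neg hb]
      exact hdmono (by omega)
  have hc : ∀ k, d k - (if k = 0 then 0 else d (k - 1)) = f (k+1) - f k := by
    intro k; simp [hf]
  have htel : ∑ k ∈ Finset.range (B + 1), (f (k+1) - f k) = Module.finrank (ZMod p) V := by
    rw [Finset.sum_range_tsub hfmono]
    simp [hf, hdB]
  -- the main chain
  have hmain : ∑ k ∈ Finset.range (B + 1), (f (k+1) - f k) * p ^ k ≤ ∑ j, nmul j := by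
    have h1 : ∀ k, (f (k+1) - f k) ≤ t k := by
      intro k
      have := hkey k
      simp only [hf]
      simp only [Nat.add_sub_cancel, if_neg (Nat.succ_ne_zero k)]
      omega
    calc ∑ k ∈ Finset.range (B + 1), (f (k+1) - f k) * p ^ k
        ≤ ∑ k ∈ Finset.range (B + 1), t k * p ^ k :=
          Finset.sum_le_sum (fun k _ => Nat.mul_le_mul_right _ (h1 k))
      _ ≤ ∑ j, nmul j := by
          have hfw : ∑ k ∈ Finset.range (B + 1),
              ∑ j ∈ Finset.univ.filter (fun j => e j = k), p ^ (e j) = ∑ j, p ^ (e j) :=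
            Finset.sum_fiberwise_of_maps_to
              (fun j _ => Finset.mem_range.mpr (Nat.lt_succ_of_le (heB j))) _
          have h2 : ∑ k ∈ Finset.range (B + 1), t k * p ^ k = ∑ j, p ^ (e j) := by
            rw [← hfw]
            refine Finset.sum_congr rfl (fun k _ => ?_)
            rw [Finset.sum_congr rfl (fun j hj => ?_), Finset.sum_const, smul_eq_mul]
            simp only [Finset.mem_filter] at hj
            rw [hj.2]
          rw [h2]
          exact Finset.sum_le_sum (fun j _ => hele j)
  -- finish
  apply Nat.le_sub_of_add_le
  rw [show Module.finrank (ZMod p) V = ∑ k ∈ Finset.range (B + 1), (f (k+1) - f k) from htel.symm]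
  have hgoal : ∑ k ∈ Finset.range (B + 1),
      (d k - (if k = 0 then 0 else d (k - 1))) * (2 * p ^ k - 1)
      = ∑ k ∈ Finset.range (B + 1), (f (k+1) - f k) * (2 * p ^ k - 1) :=
    Finset.sum_congr rfl (fun k _ => by rw [hc k])
  rw [hgoal, ← Finset.sum_add_distrib]
  have h3 : ∀ k, (f (k+1) - f k) * (2 * p ^ k - 1) + (f (k+1) - f k)
      = 2 * ((f (k+1) - f k) * p ^ k) := by
    intro k
    have hpk : 1 ≤ p ^ k := Nat.one_le_pow _ _ hp.pos
    have h4 : 2 * p ^ k - 1 + 1 = 2 * p ^ k := by omega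
    calc (f (k+1) - f k) * (2 * p ^ k - 1) + (f (k+1) - f k)
        = (f (k+1) - f k) * ((2 * p ^ k - 1) + 1) := (Nat.mul_succ _ _).symm
      _ = (f (k+1) - f k) * (2 * p ^ k) := by rw [h4]
      _ = 2 * ((f (k+1) - f k) * p ^ k) := by ring
  calc ∑ k ∈ Finset.range (B + 1), ((f (k+1) - f k) * (2 * p ^ k - 1) + (f (k+1) - f k))
      = ∑ k ∈ Finset.range (B + 1), 2 * ((f (k+1) - f k) * p ^ k) :=
        Finset.sum_congr rfl (fun k _ => h3 k)
    _ = 2 * ∑ k ∈ Finset.range (B + 1), (f (k+1) - f k) * p ^ k := by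
        rw [Finset.mul_sum]
    _ ≤ 2 * ∑ j, nmul j := Nat.mul_le_mul_left _ hmain
end

section
/- Let p be a prime, V a finite-dimensional F_p-vector space, and ρ a sum of one-dimensional classes given by distinct nonzero elements v_1,...,v_m ∈ V with multiplicities n_1,...,n_m. In the polynomial ring S(V), the total Chern class ∏_{j=1}^m (1 + v_j)^{n_j} lies in the subalgebra S(V(0) + Φ(V(1)) + Φ²(V(2)) + ... + Φ^k(V(k))), where V(i) is the span of those v_j such that p^{i+1} does not divide n_j and Φ^i(W) denotes the span of p^i-th powers of elements of W. -/
open MvPolynomial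

/-- Let `V` be a finite-dimensional `F_p`-vector space, realized as the span of the
degree-one variables in the symmetric algebra `S(V) = F_p[X_1,…,X_c]`.  Let
`v_1,…,v_m ∈ V` be distinct nonzero elements with multiplicities `n_1,…,n_m ≥ 1`.
Then the total Chern class `∏_j (1 + v_j)^{n_j}` lies in the subalgebra
`S(V(0) + Φ(V(1)) + Φ²(V(2)) + ⋯)`, where `V(i)` is the span of those `v_j` with
`p^{i+1} ∤ n_j` and `Φ^i(W)` is the span of `p^i`-th powers of elements of `W`
(for `i` beyond the point where the filtration reaches `V`, the extra terms
`Φ^i(V)` generate nothing new). -/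
theorem stmt7 (p : ℕ) (hp : p.Prime) (c m : ℕ)
    (v : Fin m → MvPolynomial (Fin c) (ZMod p))
    (hlin : ∀ j, v j ∈ Submodule.span (ZMod p)
        (Set.range (X : Fin c → MvPolynomial (Fin c) (ZMod p))))
    (hinj : Function.Injective v) (hne : ∀ j, v j ≠ 0)
    (nmul : Fin m → ℕ) (hpos : ∀ j, 0 < nmul j) :
    (∏ j, (1 + v j) ^ nmul j) ∈
      Algebra.adjoin (ZMod p)
        (⋃ i : ℕ, {f | ∃ w ∈ Submodule.span (ZMod p)
            {x | ∃ j, ¬ ((p : ℕ) ^ (i + 1) ∣ nmul j) ∧ x = v j}, f = w ^ p ^ i}) := by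
  haveI : Fact p.Prime := ⟨hp⟩
  set S : Set (MvPolynomial (Fin c) (ZMod p)) :=
    (⋃ i : ℕ, {f | ∃ w ∈ Submodule.span (ZMod p)
        {x | ∃ j, ¬ ((p : ℕ) ^ (i + 1) ∣ nmul j) ∧ x = v j}, f = w ^ p ^ i}) with hS
  have key : ∀ n : ℕ, ∀ u : MvPolynomial (Fin c) (ZMod p), ∀ i : ℕ,
      (∀ t : ℕ, ¬ (p ^ (t + 1) ∣ n) → u ^ p ^ (i + t) ∈ Algebra.adjoin (ZMod p) S) →
      (1 + u ^ p ^ i) ^ n ∈ Algebra.adjoin (ZMod p) S := by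
    intro n
    induction n using Nat.strong_induction_on with
    | _ n IH =>
      intro u i hu
      rcases Nat.eq_zero_or_pos n with hn | hn
      · simp only [hn, pow_zero]; exact one_mem _
      · have hq : n / p < n := Nat.div_lt_self hn hp.one_lt
        have e1 : (1 + u ^ p ^ i) ^ n
            = ((1 + u ^ p ^ i) ^ p) ^ (n / p) * (1 + u ^ p ^ i) ^ (n % p) := by
          rw [← pow_mul, ← pow_add, Nat.div_add_mod]
        have e2 : (1 + u ^ p ^ i) ^ p = 1 + u ^ p ^ (i + 1) := by
          rw [add_pow_char, one_pow, ← pow_mul, ← pow_succ]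
        rw [e1, e2]
        refine mul_mem ?_ ?_
        · refine IH (n / p) hq u (i + 1) ?_
          intro t ht
          have hnd : ¬ (p ^ (t + 1 + 1) ∣ n) := by
            intro h
            obtain ⟨k, hk⟩ := h
            apply ht
            refine ⟨k, ?_⟩
            have : n = p * (p ^ (t + 1) * k) := by
              rw [hk]; ring
            rw [this, Nat.mul_div_cancel_left _ hp.pos]
          have := hu (t + 1) hnd
          rwa [show i + (t + 1) = i + 1 + t by omega] at this
        · rcases Nat.eq_zero_or_pos (n % p) with hr | hr
          · simp only [hr, pow_zero]; exact one_mem _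
          · have hnd : ¬ (p ^ (0 + 1) ∣ n) := by
              simpa [pow_one, Nat.dvd_iff_mod_eq_zero] using hr.ne'
            have hmem := hu 0 hnd
            rw [add_zero] at hmem
            exact pow_mem (add_mem (one_mem _) hmem) _
  refine Subalgebra.prod_mem _ fun j _ => ?_
  have := key (nmul j) (v j) 0 ?_
  · simpa using this
  · intro t ht
    apply Algebra.subset_adjoin
    rw [hS]
    apply Set.mem_iUnion.2
    refine ⟨t, ⟨v j, Submodule.subset_span ⟨j, ht, rfl⟩, ?_⟩⟩
    rw [zero_add]
end

section
/- Let p be a prime and let Z/p act on the polynomial ring F_p[x_1,...,x_t, Y_1,...,Y_t] where σ(x_j) = x_j and σ fixes the span of {x_1,...,x_t} and acts on Y_j (where Y_j stands for y_j^{p^{k_j}} with σ(y_j) = y_j + x_j extended multiplicatively, so σ(Y_j) = (y_j + x_j)^{p^{k_j}} = Y_j + x_j^{p^{k_j}}). Then the image of the invariant subring F_p[x_1,...,x_t, Y_1,...,Y_t]^{Z/p} under setting all x_j = 0 is contained in F_p[Y_1^p, ..., Y_t^p]. -/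
open MvPolynomial

lemma aux_coeff_pderiv {σ : Type*} [DecidableEq σ] {R : Type*} [CommSemiring R]
    (j : σ) (g : MvPolynomial σ R) (d : σ →₀ ℕ) (hd : d j ≠ 0) :
    coeff (d - Finsupp.single j 1) (pderiv j g) = coeff d g * (d j : R) := by
  conv_lhs => rw [g.as_sum, map_sum]
  rw [coeff_sum]
  simp only [pderiv_monomial, coeff_monomial]
  rw [Finset.sum_eq_single d]
  · rw [if_pos rfl]
  · intro b _ hb
    rcases Nat.eq_zero_or_pos (b j) with h0 | h1
    · simp [h0]
    · rw [if_neg]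
      intro he
      apply hb
      ext i
      have := DFunLike.congr_fun he i
      simp only [Finsupp.tsub_apply, Finsupp.single_apply] at this
      rcases eq_or_ne j i with rfl | hne
      · rw [if_pos rfl] at this; omega
      · rw [if_neg hne] at this; omega
  · intro hdn
    rw [MvPolynomial.notMem_support_iff] at hdn
    simp [hdn]

lemma aux_rho_coeff {σ : Type*} [DecidableEq σ] {A : Type*} [CommSemiring A]
    (j : σ) (q : ℕ) (hq : q ≠ 0) (c : MvPolynomial σ A) :
    (∀ r < q, (aeval (R := A) (fun i => Polynomial.C (X i) +
        if i = j then Polynomial.X ^ q else 0) c).coeff r = if r = 0 then c else 0) ∧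
      (aeval (R := A) (fun i => Polynomial.C (X i) +
        if i = j then Polynomial.X ^ q else 0) c).coeff q = pderiv j c := by
  set v : σ → Polynomial (MvPolynomial σ A) :=
    fun i => Polynomial.C (X i) + if i = j then Polynomial.X ^ q else 0 with hv
  induction c using MvPolynomial.induction_on with
  | C a =>
      constructor
      · intro r hr
        rw [aeval_C]
        simp only [algebraMap_def, Polynomial.algebraMap_apply]
        rw [Polynomial.coeff_C]
        split_ifs with h1
        · subst h1; simp [algebraMap_def]
        · rfl
      · rw [aeval_C]
        simp only [algebraMap_def, Polynomial.algebraMap_apply]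
        rw [Polynomial.coeff_C, if_neg hq, pderiv_C]
  | add f g hf hg =>
      constructor
      · intro r hr
        rw [map_add, Polynomial.coeff_add, hf.1 r hr, hg.1 r hr]
        split_ifs <;> simp
      · rw [map_add, Polynomial.coeff_add, hf.2, hg.2, map_add]
  | mul_X f i hf =>
      have hXv : aeval (R := A) v (f * X i) = aeval v f * (Polynomial.C (X i) + if i = j then Polynomial.X ^ q else 0) := by
        rw [map_mul, aeval_X]
      constructor
      · intro r hr
        rw [hXv, mul_add, Polynomial.coeff_add, Polynomial.coeff_mul_C]
        have h2 : (aeval v f * if i = j then Polynomial.X ^ q else 0).coeff r = 0 := by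
          split_ifs with hij
          · rw [Polynomial.coeff_mul_X_pow', if_neg (by omega)]
          · simp
        rw [h2, add_zero, hf.1 r hr]
        split_ifs <;> simp
      · rw [hXv, mul_add, Polynomial.coeff_add, Polynomial.coeff_mul_C, hf.2]
        have h2 : (aeval v f * if i = j then Polynomial.X ^ q else 0).coeff q
            = if i = j then f else 0 := by
          split_ifs with hij
          · rw [Polynomial.coeff_mul_X_pow', if_pos le_rfl, Nat.sub_self,
              hf.1 0 (Nat.pos_of_ne_zero hq), if_pos rfl]
          · simp
        rw [h2, pderiv_mul]
        rcases eq_or_ne i j with rfl | hij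
        · simp [mul_comm]
        · simp [hij, Ne.symm hij]

lemma zero_pderiv_key (p t : ℕ) (hp : p.Prime) (k : Fin t → ℕ) (j : Fin t)
    (f : MvPolynomial (Fin t ⊕ Fin t) (ZMod p))
    (hf : aeval (Sum.elim
          (fun j => (X (Sum.inl j) : MvPolynomial (Fin t ⊕ Fin t) (ZMod p)))
          (fun j => X (Sum.inr j) + X (Sum.inl j) ^ p ^ (k j))) f = f) :
    pderiv j (aeval (Sum.elim (fun _ => (0 : MvPolynomial (Fin t) (ZMod p)))
        (fun j => X j)) f) = 0 := by
  set K := ZMod p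
  set R := MvPolynomial (Fin t) K
  set q := p ^ k j with hqdef
  have hq : q ≠ 0 := pow_ne_zero _ hp.pos.ne'
  set u : Fin t ⊕ Fin t → Polynomial R :=
    Sum.elim (fun i => if i = j then Polynomial.X else 0) (fun i => Polynomial.C (X i)) with hu
  set w₀ : Fin t → Polynomial R :=
    fun i => Polynomial.C (X i) + if i = j then Polynomial.X ^ q else 0 with hw
  set ρ : Polynomial R →+* Polynomial R :=
    Polynomial.eval₂RingHom ((aeval w₀ : R →ₐ[K] Polynomial R) : R →+* Polynomial R)
      Polynomial.X with hρ
  set F : Polynomial R := aeval u f with hF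
  -- Step 1 : ρ F = F
  have key : ρ F = F := by
    have hcomp : ρ.comp ((aeval u : MvPolynomial (Fin t ⊕ Fin t) K →ₐ[K] Polynomial R) :
          MvPolynomial (Fin t ⊕ Fin t) K →+* Polynomial R)
        = ((aeval u : MvPolynomial (Fin t ⊕ Fin t) K →ₐ[K] Polynomial R) :
            MvPolynomial (Fin t ⊕ Fin t) K →+* Polynomial R).comp
          ((aeval (Sum.elim
              (fun j => (X (Sum.inl j) : MvPolynomial (Fin t ⊕ Fin t) K))
              (fun j => X (Sum.inr j) + X (Sum.inl j) ^ p ^ (k j))) :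
                MvPolynomial (Fin t ⊕ Fin t) K →ₐ[K] MvPolynomial (Fin t ⊕ Fin t) K) :
            MvPolynomial (Fin t ⊕ Fin t) K →+* MvPolynomial (Fin t ⊕ Fin t) K) := by
      apply MvPolynomial.ringHom_ext
      · intro r
        simp [hρ, algebraMap_def, Polynomial.algebraMap_apply]
      · rintro (i | i)
        · simp only [RingHom.coe_comp, Function.comp_apply, AlgHom.coe_toRingHom, aeval_X,
            Sum.elim_inl, hu, hρ]
          split_ifs <;> simp
        · simp only [RingHom.coe_comp, Function.comp_apply, AlgHom.coe_toRingHom, aeval_X,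
            Sum.elim_inr, hu, hρ, map_add, map_pow, Polynomial.coe_eval₂RingHom,
            Polynomial.eval₂_C, RingHom.coe_coe, Sum.elim_inl]
          rcases eq_or_ne i j with rfl | hij
          · rw [aeval_X]
            simp only [hw]
            simp [hqdef]
          · rw [aeval_X]
            simp only [hw]
            simp [hij, zero_pow (pow_ne_zero (k i) hp.pos.ne' : p ^ k i ≠ 0)]
    have := congrArg (fun φ => φ f) hcomp
    simp only [RingHom.coe_comp, Function.comp_apply, AlgHom.coe_toRingHom] at this
    rw [hf] at this
    exact this
  -- Step 3 : compare the coefficient of X^q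
  have hcoeff : (ρ F).coeff q = pderiv j (F.coeff 0) + F.coeff q := by
    rw [hρ, Polynomial.coe_eval₂RingHom, Polynomial.eval₂_eq_sum, Polynomial.coeff_sum]
    rw [Polynomial.sum_def]
    have hterm : ∀ n ∈ F.support,
        (aeval w₀ (F.coeff n) * Polynomial.X ^ n).coeff q
          = (if n = 0 then pderiv j (F.coeff n) else 0)
            + (if n = q then F.coeff n else 0) := by
      intro n _
      rw [Polynomial.coeff_mul_X_pow']
      rcases eq_or_ne n 0 with rfl | hn0
      · rw [if_pos (Nat.zero_le q), Nat.sub_zero, (aux_rho_coeff j q hq (F.coeff 0)).2,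
          if_pos rfl, if_neg (Ne.symm hq), add_zero]
      rcases eq_or_ne n q with rfl | hnq
      · rw [if_pos le_rfl, Nat.sub_self, ((aux_rho_coeff j q hq (F.coeff q)).1 0
          (Nat.pos_of_ne_zero hq))]
        simp [hn0]
      rcases le_or_gt n q with h | h
      · have hlt : q - n < q := by omega
        rw [if_pos h, ((aux_rho_coeff j q hq (F.coeff n)).1 _ hlt),
          if_neg (by omega), if_neg hn0, if_neg hnq, add_zero]
      · rw [if_neg (by omega), if_neg hn0, if_neg hnq, add_zero]
    simp only [RingHom.coe_coe]
    rw [Finset.sum_congr rfl hterm, Finset.sum_add_distrib,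
      Finset.sum_ite_eq' F.support 0 (fun n => pderiv j (F.coeff n)),
      Finset.sum_ite_eq' F.support q (fun n => F.coeff n)]
    congr 1
    · split_ifs with h
      · rfl
      · rw [Polynomial.notMem_support_iff] at h
        rw [h, map_zero]
    · split_ifs with h
      · rfl
      · rw [Polynomial.notMem_support_iff] at h
        rw [h]
  rw [key] at hcoeff
  have hzero : pderiv j (F.coeff 0) = 0 := right_eq_add.mp hcoeff
  -- Step 4 : F.coeff 0 equals the image of f under setting x := 0
  have hc0 : F.coeff 0 = aeval (Sum.elim (fun _ => (0 : R)) (fun j => X j)) f := by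
    have hcomp2 : ((Polynomial.evalRingHom (0 : R)).comp
          ((aeval u : MvPolynomial (Fin t ⊕ Fin t) K →ₐ[K] Polynomial R) :
            MvPolynomial (Fin t ⊕ Fin t) K →+* Polynomial R))
        = ((aeval (Sum.elim (fun _ => (0 : R)) (fun j => X j)) :
            MvPolynomial (Fin t ⊕ Fin t) K →ₐ[K] R) :
            MvPolynomial (Fin t ⊕ Fin t) K →+* R) := by
      apply MvPolynomial.ringHom_ext
      · intro r
        simp [algebraMap_def, Polynomial.algebraMap_apply]
      · rintro (i | i)
        · simp only [RingHom.coe_comp, Function.comp_apply, AlgHom.coe_toRingHom, aeval_X,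
            Sum.elim_inl, hu]
          split_ifs <;> simp
        · simp [hu]
    have := congrArg (fun φ => φ f) hcomp2
    simp only [RingHom.coe_comp, Function.comp_apply, AlgHom.coe_toRingHom,
      Polynomial.coe_evalRingHom] at this
    rw [Polynomial.coeff_zero_eq_eval_zero]
    exact this
  rw [hc0] at hzero
  exact hzero

lemma mem_adjoin_of_pderiv_zero (p t : ℕ) (hp : p.Prime)
    (G : MvPolynomial (Fin t) (ZMod p)) (h : ∀ j, pderiv j G = 0) :
    G ∈ Algebra.adjoin (ZMod p)
      (Set.range fun j : Fin t => (X j : MvPolynomial (Fin t) (ZMod p)) ^ p) := by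
  haveI : Fact p.Prime := ⟨hp⟩
  have hdiv : ∀ d ∈ G.support, ∀ j, p ∣ d j := by
    intro d hd j
    by_contra hnd
    have hdj : d j ≠ 0 := by
      intro h0
      exact hnd (h0 ▸ dvd_zero p)
    have h1 := aux_coeff_pderiv j G d hdj
    rw [h j, coeff_zero] at h1
    rcases mul_eq_zero.mp h1.symm with h2 | h2
    · exact (MvPolynomial.mem_support_iff.mp hd) h2
    · exact hnd ((ZMod.natCast_eq_zero_iff _ _).mp h2)
  rw [G.as_sum]
  apply Subalgebra.sum_mem
  intro d hd
  rw [monomial_eq, ← MvPolynomial.algebraMap_eq]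
  apply Subalgebra.mul_mem
  · exact Subalgebra.algebraMap_mem _ _
  · rw [Finsupp.prod]
    apply Subalgebra.prod_mem
    intro i _
    obtain ⟨e, he⟩ := hdiv d hd i
    rw [he, pow_mul]
    exact pow_mem (Algebra.subset_adjoin (Set.mem_range_self i)) e

/-- Let `Z/p` act on `F_p[x_1,…,x_t, Y_1,…,Y_t]` (the `x_j` are the `Sum.inl`
variables, the `Y_j = y_j^{p^{k_j}}` the `Sum.inr` variables) by `σ(x_j) = x_j` and
`σ(Y_j) = Y_j + x_j^{p^{k_j}}`.  Then the image of the invariant subring under the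
quotient map setting all `x_j = 0` (landing in `F_p[Y_1,…,Y_t]`) is contained in
`F_p[Y_1^p,…,Y_t^p]`. -/
theorem stmt9 (p t : ℕ) (hp : p.Prime) (k : Fin t → ℕ) :
    {g : MvPolynomial (Fin t) (ZMod p) |
        ∃ f : MvPolynomial (Fin t ⊕ Fin t) (ZMod p),
          aeval (Sum.elim
              (fun j => (X (Sum.inl j) : MvPolynomial (Fin t ⊕ Fin t) (ZMod p)))
              (fun j => X (Sum.inr j) + X (Sum.inl j) ^ p ^ (k j))) f = f ∧
          aeval (Sum.elim (fun _ => (0 : MvPolynomial (Fin t) (ZMod p)))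
              (fun j => X j)) f = g} ⊆
      ↑(Algebra.adjoin (ZMod p)
          (Set.range fun j : Fin t => (X j : MvPolynomial (Fin t) (ZMod p)) ^ p)) := by
  rintro g ⟨f, hf, rfl⟩
  exact mem_adjoin_of_pderiv_zero p t hp _ (fun j => zero_pderiv_key p t hp k j f hf)
end

section
/- Let p be an odd prime and let Z/p act on the polynomial ring F_p[y_1,...,y_p] by cyclically permuting the variables. Then the image of the invariant ring F_p[y_1,...,y_p]^{Z/p} under the 'diagonal' algebra map sending each y_i to y (into F_p[y]) is exactly F_p[y^p]. -/
open MvPolynomial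

lemma derivative_aeval_diag {σ R : Type*} [Fintype σ] [DecidableEq σ] [CommSemiring R]
    (f : MvPolynomial σ R) :
    Polynomial.derivative (aeval (fun _ : σ => (Polynomial.X : Polynomial R)) f) =
      ∑ i : σ, aeval (fun _ : σ => (Polynomial.X : Polynomial R)) (pderiv i f) := by
  induction f using MvPolynomial.induction_on with
  | C a => simp
  | add f g hf hg => simp [hf, hg, Finset.sum_add_distrib]
  | mul_X f j hf =>
    have hder : ∀ i : σ, pderiv i (f * X j) = pderiv i f * X j + f * C (if j = i then 1 else 0) := by
      intro i
      rw [pderiv_mul, pderiv_X, Pi.single_apply]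
      split_ifs with h <;> simp [h, mul_comm]
    rw [map_mul, aeval_X, Polynomial.derivative_mul, Polynomial.derivative_X, mul_one, hf]
    rw [Finset.sum_congr rfl fun i _ => congrArg _ (hder i)]
    simp only [map_add, map_mul, aeval_X, aeval_C]
    rw [Finset.sum_add_distrib, ← Finset.sum_mul]
    congr 1
    simp [Finset.mul_sum, apply_ite (algebraMap R (Polynomial R))]

/-- Let `p` be an odd prime and let `Z/p` act on `F_p[y_1,…,y_p]` (variables indexed by
`ZMod p`) by cyclically permuting the variables.  The image of the invariant ring under
the diagonal map `y_i ↦ y` into `F_p[y]` is exactly `F_p[y^p]`. -/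
theorem stmt11 (p : ℕ) (hp : p.Prime) (hodd : p ≠ 2) :
    {g : Polynomial (ZMod p) |
        ∃ f : MvPolynomial (ZMod p) (ZMod p),
          rename (fun i => i + 1) f = f ∧
          aeval (fun _ : ZMod p => (Polynomial.X : Polynomial (ZMod p))) f = g} =
      ↑(Algebra.adjoin (ZMod p) {(Polynomial.X : Polynomial (ZMod p)) ^ p}) := by
  haveI : Fact p.Prime := ⟨hp⟩
  set R := ZMod p
  set τ : ZMod p → ZMod p := fun i => i + 1 with hτ
  have hτinj : Function.Injective τ := add_left_injective 1
  set diag : ZMod p → Polynomial R := fun _ => Polynomial.X with hdiag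
  -- the invariant product of all variables maps to X^p
  have hprod_inv : rename τ (∏ i : ZMod p, (X i : MvPolynomial (ZMod p) R)) =
      ∏ i : ZMod p, X i := by
    rw [map_prod]
    simp only [rename_X]
    exact Fintype.prod_equiv (Equiv.addRight (1 : ZMod p)) _ _ (fun i => rfl)
  have hprod_diag : aeval diag (∏ i : ZMod p, (X i : MvPolynomial (ZMod p) R)) =
      Polynomial.X ^ p := by
    rw [map_prod]
    simp [diag, ZMod.card]
  rw [Algebra.adjoin_singleton_eq_range_aeval]
  ext g
  simp only [Set.mem_setOf_eq, SetLike.mem_coe, AlgHom.mem_range]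
  constructor
  · rintro ⟨f, hinv, rfl⟩
    -- the image of each invariant polynomial has zero derivative
    have hconst : ∀ i : ZMod p, aeval diag (pderiv i f) = aeval diag (pderiv 0 f) := by
      have hstep : ∀ i : ZMod p, aeval diag (pderiv (i + 1) f) = aeval diag (pderiv i f) := by
        intro i
        conv_lhs => rw [← hinv]
        rw [show (i + 1 : ZMod p) = τ i from rfl, pderiv_rename hτinj, aeval_rename]
        rfl
      have hnat : ∀ n : ℕ, aeval diag (pderiv (n : ZMod p) f) = aeval diag (pderiv 0 f) := by
        intro n
        induction n with
        | zero => simp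
        | succ n ih => rw [Nat.cast_succ, hstep, ih]
      intro i
      have h0 : ((i.val : ℕ) : ZMod p) = i := ZMod.natCast_rightInverse i
      rw [← h0]; exact hnat _
    have hd : Polynomial.derivative (aeval diag f) = 0 := by
      rw [derivative_aeval_diag, Finset.sum_congr rfl fun i _ => hconst i, Finset.sum_const,
        Finset.card_univ, ZMod.card, nsmul_eq_mul, CharP.cast_eq_zero (Polynomial R) p, zero_mul]
    refine ⟨Polynomial.contract p (aeval diag f), ?_⟩
    have := Polynomial.expand_contract p hd hp.ne_zero (R := R)
    rw [← Polynomial.comp_eq_aeval, ← Polynomial.expand_eq_comp_X_pow]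
    exact this
  · rintro ⟨q, rfl⟩
    refine ⟨Polynomial.aeval (∏ i : ZMod p, (X i : MvPolynomial (ZMod p) R)) q, ?_, ?_⟩
    · rw [← Polynomial.aeval_algHom_apply, hprod_inv]
    · rw [← Polynomial.aeval_algHom_apply, hprod_diag]
end

section
/- Let R be a graded Noetherian commutative ring with maximal graded ideal 𝔪, let M be a graded R-module, and fix integers s, t. Suppose the local cohomology groups H_𝔪^{s',t'}(M) vanish for all s' < s, and also H_𝔪^{s,t'}(M) = 0 for all t' > t. If z ∈ R is homogeneous of degree |z| and is a nonzerodivisor on M, then H_𝔪^{s',t'}(M/zM) = 0 for all s' < s−1 and for all (s−1, t') with t' > t + |z|, and moreover H_𝔪^{s−1, t+|z|}(M/zM) ≅ H_𝔪^{s,t}(M). -/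
private lemma sandwich {A B C : Type} [AddCommGroup A] [AddCommGroup B] [AddCommGroup C]
    (hA : Subsingleton A) (hC : Subsingleton C) (f : A →+ B) (g : B →+ C)
    (h : Function.Exact f g) : Subsingleton B := by
  constructor
  intro x y
  have hx : x = 0 := by
    obtain ⟨a, ha⟩ := (h x).mp (Subsingleton.elim _ _)
    rw [← ha, Subsingleton.elim a 0, map_zero]
  have hy : y = 0 := by
    obtain ⟨a, ha⟩ := (h y).mp (Subsingleton.elim _ _)
    rw [← ha, Subsingleton.elim a 0, map_zero]
  rw [hx, hy]

/-- Graded local cohomology, abstracted: `H s t` stands for `H_𝔪^{s,t}(M)` and `Hq s t`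
for `H_𝔪^{s,t}(M/zM)`, where `z` is a homogeneous nonzerodivisor on `M` of degree `d`.
The short exact sequence `0 → Σ^d M →^z M → M/zM → 0` yields the long exact sequence
`⋯ → H^{s,t}(M) →^{·z} H^{s,t+d}(M) → H^{s,t+d}(M/zM) →^δ H^{s+1,t}(M) → ⋯`, encoded by
the maps `mulz`, `pr`, `δ` and the exactness hypotheses below.  If `H^{s',t'}(M) = 0` for
all `s' < s` and `H^{s,t'}(M) = 0` for all `t' > t`, then `H^{s',t'}(M/zM) = 0` for all
`s' < s - 1`, `H^{s-1,t'}(M/zM) = 0` for all `t' > t + d`, and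
`H^{s-1,t+d}(M/zM) ≅ H^{s,t}(M)`. -/
theorem stmt12 (H Hq : ℕ → ℤ → Type)
    [∀ s t, AddCommGroup (H s t)] [∀ s t, AddCommGroup (Hq s t)]
    (d : ℤ) (hd : 0 < d)
    (mulz : ∀ s t, H s t →+ H s (t + d))
    (pr : ∀ s t, H s t →+ Hq s t)
    (δ : ∀ s t, Hq s t →+ H (s + 1) (t - d))
    (hex1 : ∀ s t, Function.Exact (mulz s t) (pr s (t + d)))
    (hex2 : ∀ s t, Function.Exact (pr s t) (δ s t))
    (hex3 : ∀ s t, Function.Exact (δ s t) (mulz (s + 1) (t - d)))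
    (s : ℕ) (t : ℤ) (hs : 1 ≤ s)
    (hv1 : ∀ s' < s, ∀ t' : ℤ, Subsingleton (H s' t'))
    (hv2 : ∀ t' > t, Subsingleton (H s t')) :
    (∀ s' < s - 1, ∀ t' : ℤ, Subsingleton (Hq s' t')) ∧
    (∀ t' > t + d, Subsingleton (Hq (s - 1) t')) ∧
    Nonempty (Hq (s - 1) (t + d) ≃+ H s t) := by
  obtain ⟨n, rfl⟩ : ∃ n, s = n + 1 := ⟨s - 1, by omega⟩
  refine ⟨?_, ?_, ?_⟩
  · intro s' hs' t'
    exact sandwich (hv1 s' (by omega) t') (hv1 (s' + 1) (by omega) (t' - d))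
      (pr s' t') (δ s' t') (hex2 s' t')
  · intro t' ht'
    exact sandwich (hv1 n (by omega) t') (hv2 (t' - d) (by omega))
      (pr n t') (δ n t') (hex2 n t')
  · have hinj : Function.Injective (δ n (t + d)) := by
      rw [injective_iff_map_eq_zero]
      intro x hx
      obtain ⟨a, ha⟩ := (hex2 n (t + d) x).mp hx
      have : Subsingleton (H n (t + d)) := hv1 n (by omega) (t + d)
      rw [← ha, Subsingleton.elim a 0, map_zero]
    have hsurj : Function.Surjective (δ n (t + d)) := by
      intro y
      have : Subsingleton (H (n + 1) (t + d - d + d)) := hv2 _ (by omega)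
      exact (hex3 n (t + d) y).mp (Subsingleton.elim _ _)
    have e := AddEquiv.ofBijective (δ n (t + d)) ⟨hinj, hsurj⟩
    rw [add_sub_cancel_right] at e
    exact ⟨e⟩
end

section
/- Let R be a graded Noetherian ring with maximal graded ideal 𝔪 and M a finitely generated graded R-module satisfying: H_𝔪^{s',t'}(M) = 0 for s' < s and H_𝔪^{s,t'}(M) = 0 for t' > t. If z_1,...,z_s is an M-regular sequence of homogeneous elements, then H_𝔪^{0,t'}(M/(z_1,...,z_s)M) = 0 for t' > t + |z_1| + ... + |z_s|, and H_𝔪^{0, t+|z_1|+...+|z_s|}(M/(z_1,...,z_s)M) ≅ H_𝔪^{s,t}(M). -/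
private lemma aux_sub {A B C : Type} [AddCommGroup A] [AddCommGroup B] [AddCommGroup C]
    (f : A →+ B) (g : B →+ C) (h : Function.Exact f g)
    (hA : Subsingleton A) (hC : Subsingleton C) : Subsingleton B := by
  constructor
  have hz : ∀ x : B, x = 0 := by
    intro x
    have hg : g x = 0 := Subsingleton.elim _ _
    obtain ⟨a, ha⟩ := (h x).mp hg
    rw [← ha, Subsingleton.elim a 0, map_zero]
  intro a b; rw [hz a, hz b]

private lemma aux_inj {A B C : Type} [AddCommGroup A] [AddCommGroup B] [AddCommGroup C]
    (f : A →+ B) (g : B →+ C) (h : Function.Exact f g)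
    (hA : Subsingleton A) : Function.Injective g := by
  rw [injective_iff_map_eq_zero]
  intro x hx
  obtain ⟨a, ha⟩ := (h x).mp hx
  rw [← ha, Subsingleton.elim a 0, map_zero]

private lemma aux_surj {B C D : Type} [AddCommGroup B] [AddCommGroup C] [AddCommGroup D]
    (g : B →+ C) (k : C →+ D) (h : Function.Exact g k)
    (hD : Subsingleton D) : Function.Surjective g := by
  intro c
  have : k c = 0 := Subsingleton.elim _ _
  exact (h c).mp this

private def castH (H : ℕ → ℕ → ℤ → Type) [inst : ∀ i n t, AddCommGroup (H i n t)]
    {i : ℕ} {n1 n2 : ℕ} {t1 t2 : ℤ} (hn : n1 = n2) (ht : t1 = t2) :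
    H i n1 t1 ≃+ H i n2 t2 := by
  subst hn; subst ht; exact AddEquiv.refl _

/-- Graded local cohomology along a regular sequence, abstracted: `H i n t` stands for
`H_𝔪^{n,t}(M/(z_1,…,z_i)M)` for a regular sequence `z_1,…,z_s` of homogeneous elements
with `|z_i| = d i` (indexing `d (i-1) = |z_i|`); for each `i < s`, the short exact
sequence `0 → Σ^{d i} M/(z_1,…,z_i) → M/(z_1,…,z_i) → M/(z_1,…,z_{i+1}) → 0` yields a
long exact sequence, encoded by `mulz`, `pr`, `δ` and the exactness hypotheses.  If
`H_𝔪^{n,t'}(M) = 0` for `n < s` and `H_𝔪^{s,t'}(M) = 0` for `t' > t`, then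
`H_𝔪^{0,t'}(M/(z_1,…,z_s)) = 0` for `t' > t + |z_1| + ⋯ + |z_s|` and
`H_𝔪^{0, t + |z_1| + ⋯ + |z_s|}(M/(z_1,…,z_s)) ≅ H_𝔪^{s,t}(M)`. -/
theorem stmt13 (s : ℕ) (H : ℕ → ℕ → ℤ → Type)
    [∀ i n t, AddCommGroup (H i n t)]
    (d : ℕ → ℤ) (hd : ∀ i, 0 < d i)
    (mulz : ∀ i n t, H i n t →+ H i n (t + d i))
    (pr : ∀ i n t, H i n t →+ H (i + 1) n t)
    (δ : ∀ i n t, H (i + 1) n t →+ H i (n + 1) (t - d i))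
    (hex1 : ∀ i < s, ∀ n t, Function.Exact (mulz i n t) (pr i n (t + d i)))
    (hex2 : ∀ i < s, ∀ n t, Function.Exact (pr i n t) (δ i n t))
    (hex3 : ∀ i < s, ∀ n t, Function.Exact (δ i n t) (mulz i (n + 1) (t - d i)))
    (t : ℤ)
    (hv1 : ∀ n < s, ∀ t' : ℤ, Subsingleton (H 0 n t'))
    (hv2 : ∀ t' > t, Subsingleton (H 0 s t')) :
    (∀ t' > t + ∑ i ∈ Finset.range s, d i, Subsingleton (H s 0 t')) ∧
    Nonempty (H s 0 (t + ∑ i ∈ Finset.range s, d i) ≃+ H 0 s t) := by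
  have key : ∀ i, i ≤ s →
      (∀ n, n + i < s → ∀ t' : ℤ, Subsingleton (H i n t')) ∧
      (∀ t' > t + ∑ j ∈ Finset.range i, d j, Subsingleton (H i (s - i) t')) ∧
      Nonempty (H i (s - i) (t + ∑ j ∈ Finset.range i, d j) ≃+ H 0 s t) := by
    intro i
    induction i with
    | zero =>
        intro _
        refine ⟨fun n hn t' => hv1 n (by omega) t', fun t' ht' => ?_, ?_⟩
        · simp only [Nat.sub_zero]
          exact hv2 t' (by simpa using ht')
        · exact ⟨castH H rfl (by simp)⟩
    | succ i ih =>
        intro hi1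
        have hi' : i < s := by omega
        obtain ⟨P1, P2, ⟨E⟩⟩ := ih (le_of_lt hi')
        set k := s - (i + 1) with hkdef
        have hk : s - i = k + 1 := by omega
        have hkismall : k + i < s := by omega
        set T := t + ∑ j ∈ Finset.range i, d j with hT
        have hsum : t + ∑ j ∈ Finset.range (i + 1), d j = T + d i := by
          rw [Finset.sum_range_succ, hT, add_assoc]
        -- injectivity of δ i k t' for any t'
        have hinj : ∀ t' : ℤ, Function.Injective (δ i k t') := fun t' =>
          aux_inj (pr i k t') (δ i k t') (hex2 i hi' k t') (P1 k hkismall t')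
        -- (2) vanishing
        have vanish : ∀ t' > T + d i, Subsingleton (H (i + 1) k t') := by
          intro t' ht'
          have hsub : Subsingleton (H i (k + 1) (t' - d i)) := by
            have := P2 (t' - d i) (by have := hd i; omega)
            rwa [hk] at this
          constructor
          intro a b
          exact hinj t' (Subsingleton.elim _ _)
        refine ⟨?_, ?_, ?_⟩
        · -- (1)
          intro n hn t'
          exact aux_sub (pr i n t') (δ i n t') (hex2 i hi' n t')
            (P1 n (by omega) t') (P1 (n + 1) (by omega) (t' - d i))
        · intro t' ht'
          rw [hsum] at ht'
          exact vanish t' ht'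
        · -- (3) the isomorphism
          have hDsub : Subsingleton (H i (k + 1) (T + d i - d i + d i)) := by
            have := P2 (T + d i - d i + d i) (by have := hd i; omega)
            rwa [hk] at this
          have hsurj : Function.Surjective (δ i k (T + d i)) :=
            aux_surj (δ i k (T + d i)) (mulz i (k + 1) (T + d i - d i))
              (hex3 i hi' k (T + d i)) hDsub
          have e1 : H (i + 1) k (T + d i) ≃+ H i (k + 1) (T + d i - d i) :=
            AddEquiv.ofBijective (δ i k (T + d i)) ⟨hinj _, hsurj⟩
          have e2 : H i (k + 1) (T + d i - d i) ≃+ H i (s - i) T :=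
            castH H hk.symm (add_sub_cancel_right _ _)
          exact ⟨((castH H rfl hsum).trans e1).trans (e2.trans E)⟩
  obtain ⟨_, P2, P3⟩ := key s le_rfl
  rw [Nat.sub_self] at P2 P3
  exact ⟨P2, P3⟩
end
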